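/- Let (X, μ) be a measure space, let Q₁ ⊆ Q₂ ⊆ X be measurable sets with μ(Q₂) < ∞, and let f, h : X → [0, ∞) be measurable functions with ∫_{Q₂} f^θ dμ < ∞ and ∫_{Q₂} h^{1+ε} dμ < ∞. Let θ ∈ (0, 1), ε ∈ (0, 1), c ≥ 1, Λ₂ > 0 and k > 0 be real numbers, and set f_k := min{f, k}. Suppose that for every Λ > Λ₂ one has ∫_{Q₁ ∩ {f_k > Λ}} f_k^{1−θ}·f^θ dμ ≤ c·Λ^{1−θ}·∫_{Q₂ ∩ {f_k > Λ}} f^θ dμ + c·∫_{Q₂ ∩ {h > Λ}} h dμ. Then ∫_{Q₁} f_k^{1−θ+ε}·f^θ dμ ≤ Λ₂^ε·∫_{Q₁} f_k^{1−θ}·f^θ dμ + (c·ε/(1 + ε − θ))·∫_{Q₂} f_k^{1−θ+ε}·f^θ dμ + c·∫_{Q₂} h^{1+ε} dμ. -/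

import Mathlib

open MeasureTheory

lemma myLintegralRpowIoo {r : ℝ} (hr : -1 < r) {a b : ℝ} (ha : 0 ≤ a) (hab : a ≤ b) :
    ∫⁻ Λ in Set.Ioo a b, ENNReal.ofReal (Λ ^ r) =
      ENNReal.ofReal ((b ^ (r + 1) - a ^ (r + 1)) / (r + 1)) := by
  have hint : IntegrableOn (fun Λ : ℝ => Λ ^ r) (Set.Ioo a b) := by
    have h1 := intervalIntegral.intervalIntegrable_rpow' (a := a) (b := b) hr
    rw [intervalIntegrable_iff_integrableOn_Ioo_of_le hab] at h1
    exact h1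
  have hnn : 0 ≤ᵐ[volume.restrict (Set.Ioo a b)] fun Λ : ℝ => Λ ^ r := by
    filter_upwards [ae_restrict_mem measurableSet_Ioo] with t ht
    exact Real.rpow_nonneg (le_trans ha ht.1.le) r
  rw [← MeasureTheory.ofReal_integral_eq_lintegral_ofReal hint hnn]
  congr 1
  rw [← MeasureTheory.integral_Ioc_eq_integral_Ioo, ← intervalIntegral.integral_of_le hab]
  exact integral_rpow (Or.inl hr)

lemma myIndicatorProd {X : Type*} (a : X → ℝ) (W : X → ENNReal) (v : ℝ → ENNReal)
    (Λ : ℝ) (x : X) :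
    Set.indicator {p : ℝ × X | p.1 < a p.2} (fun p => v p.1 * W p.2) (Λ, x)
      = Set.indicator {x | Λ < a x} (fun x => v Λ * W x) x := by
  by_cases hx : Λ < a x
  · rw [Set.indicator_of_mem (by exact hx), Set.indicator_of_mem (by exact hx)]
  · rw [Set.indicator_of_notMem (by exact hx), Set.indicator_of_notMem (by exact hx)]

lemma myMeasLevel {X : Type*} [MeasurableSpace X] (μ : Measure X) [SFinite μ]
    {a : X → ℝ} (ha : Measurable a) {W : X → ENNReal} (hW : Measurable W) :
    Measurable fun Λ : ℝ => ∫⁻ x in {x | Λ < a x}, W x ∂μ := by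
  have key : ∀ Λ : ℝ, ∫⁻ x in {x | Λ < a x}, W x ∂μ
      = ∫⁻ x, Set.indicator {p : ℝ × X | p.1 < a p.2} (fun p => W p.2) (Λ, x) ∂μ := by
    intro Λ
    rw [← lintegral_indicator (by exact measurableSet_lt measurable_const ha)]
    refine lintegral_congr fun x => ?_
    by_cases hx : Λ < a x
    · rw [Set.indicator_of_mem (by exact hx), Set.indicator_of_mem (by exact hx)]
    · rw [Set.indicator_of_notMem (by exact hx), Set.indicator_of_notMem (by exact hx)]
  simp_rw [key]
  exact Measurable.lintegral_prod_right'
    ((hW.comp measurable_snd).indicator (measurableSet_lt measurable_fst (ha.comp measurable_snd)))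

lemma myAuxSwap {X : Type*} [MeasurableSpace X] (μ : Measure X) [SFinite μ]
    {a : X → ℝ} (ha : Measurable a) {W : X → ENNReal} (hW : Measurable W)
    {v : ℝ → ENNReal} (hv : Measurable v) {s : Set ℝ} (hs : MeasurableSet s) :
    ∫⁻ Λ in s, (v Λ * ∫⁻ x in {x | Λ < a x}, W x ∂μ)
      = ∫⁻ x, (W x * ∫⁻ Λ in s ∩ Set.Iio (a x), v Λ) ∂μ := by
  have hset : ∀ Λ : ℝ, MeasurableSet {x | Λ < a x} := fun Λ =>
    measurableSet_lt measurable_const ha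
  have hmeas : Measurable (Function.uncurry fun (Λ : ℝ) (x : X) =>
      Set.indicator {p : ℝ × X | p.1 < a p.2} (fun p => v p.1 * W p.2) (Λ, x)) := by
    exact ((hv.comp measurable_fst).mul (hW.comp measurable_snd)).indicator
      (measurableSet_lt measurable_fst (ha.comp measurable_snd))
  calc ∫⁻ Λ in s, (v Λ * ∫⁻ x in {x | Λ < a x}, W x ∂μ)
      = ∫⁻ Λ in s, ∫⁻ x, Set.indicator {p : ℝ × X | p.1 < a p.2}
          (fun p => v p.1 * W p.2) (Λ, x) ∂μ := by
        refine lintegral_congr fun Λ => ?_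
        rw [← lintegral_indicator (hset Λ), ← lintegral_const_mul (v Λ)
          (hW.indicator (hset Λ))]
        refine lintegral_congr fun x => ?_
        rw [myIndicatorProd]
        by_cases hx : Λ < a x
        · rw [Set.indicator_of_mem (by exact hx), Set.indicator_of_mem (by exact hx)]
        · rw [Set.indicator_of_notMem (by exact hx), Set.indicator_of_notMem (by exact hx),
            mul_zero]
    _ = ∫⁻ x, (∫⁻ Λ in s, Set.indicator {p : ℝ × X | p.1 < a p.2}
          (fun p => v p.1 * W p.2) (Λ, x)) ∂μ := by
        exact lintegral_lintegral_swap hmeas.aemeasurable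
    _ = ∫⁻ x, (W x * ∫⁻ Λ in s ∩ Set.Iio (a x), v Λ) ∂μ := by
        refine lintegral_congr fun x => ?_
        have : ∫⁻ Λ in s, Set.indicator {p : ℝ × X | p.1 < a p.2}
            (fun p => v p.1 * W p.2) (Λ, x) = ∫⁻ Λ in s, Set.indicator (Set.Iio (a x))
            (fun Λ => v Λ * W x) Λ := by
          refine lintegral_congr fun Λ => ?_
          rw [myIndicatorProd]
          by_cases hx : Λ < a x
          · rw [Set.indicator_of_mem (by exact hx), Set.indicator_of_mem (by exact hx)]
          · rw [Set.indicator_of_notMem (by exact hx), Set.indicator_of_notMem (by exact hx)]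
        rw [this, lintegral_indicator measurableSet_Iio, Measure.restrict_restrict measurableSet_Iio]
        rw [Set.inter_comm]
        rw [← lintegral_const_mul (W x) hv]
        refine lintegral_congr fun Λ => mul_comm _ _

/-- Fubini/truncation step in the proof of the main higher integrability
theorem: integrating the truncated level-set reverse estimate over the levels. -/
theorem fubini_truncation_step {X : Type*} [MeasurableSpace X]
    (μ : Measure X) (Q₁ Q₂ : Set X)
    (hQ₁ : MeasurableSet Q₁) (hQ₂ : MeasurableSet Q₂)
    (hsub : Q₁ ⊆ Q₂) (hfin : μ Q₂ < ⊤)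
    (f h : X → ℝ) (hf : Measurable f) (hh : Measurable h)
    (hf0 : ∀ x, 0 ≤ f x) (hh0 : ∀ x, 0 ≤ h x)
    (θ ε c Λ₂ k : ℝ)
    (hθ : θ ∈ Set.Ioo (0:ℝ) 1) (hε : ε ∈ Set.Ioo (0:ℝ) 1)
    (hc : 1 ≤ c) (hΛ₂ : 0 < Λ₂) (hk : 0 < k)
    (hfint : IntegrableOn (fun x => (f x) ^ θ) Q₂ μ)
    (hhint : IntegrableOn (fun x => (h x) ^ (1 + ε)) Q₂ μ)
    (hyp : ∀ Λ : ℝ, Λ₂ < Λ →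
      ∫ x in Q₁ ∩ {x | Λ < min (f x) k}, (min (f x) k) ^ (1 - θ) * (f x) ^ θ ∂μ ≤
        c * Λ ^ (1 - θ) * ∫ x in Q₂ ∩ {x | Λ < min (f x) k}, (f x) ^ θ ∂μ +
          c * ∫ x in Q₂ ∩ {x | Λ < h x}, h x ∂μ) :
    ∫ x in Q₁, (min (f x) k) ^ (1 - θ + ε) * (f x) ^ θ ∂μ ≤
      Λ₂ ^ ε * ∫ x in Q₁, (min (f x) k) ^ (1 - θ) * (f x) ^ θ ∂μ +
        (c * ε / (1 + ε - θ)) *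
          ∫ x in Q₂, (min (f x) k) ^ (1 - θ + ε) * (f x) ^ θ ∂μ +
        c * ∫ x in Q₂, (h x) ^ (1 + ε) ∂μ := by
  obtain ⟨hθ0, hθ1⟩ := hθ
  obtain ⟨hε0, hε1⟩ := hε
  have hc0 : (0:ℝ) < c := lt_of_lt_of_le one_pos hc
  have hden : (0:ℝ) < 1 + ε - θ := by linarith
  have hdenne : (1:ℝ) + ε - θ ≠ 0 := ne_of_gt hden
  have hg : Measurable fun x => min (f x) k := hf.min measurable_const
  have hg0 : ∀ x, 0 ≤ min (f x) k := fun x => le_min (hf0 x) hk.le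
  have hgk : ∀ x, min (f x) k ≤ k := fun x => min_le_right _ _
  have hφ0 : ∀ x, 0 ≤ min (f x) k ^ (1 - θ) * f x ^ θ := fun x =>
    mul_nonneg (Real.rpow_nonneg (hg0 x) _) (Real.rpow_nonneg (hf0 x) _)
  have hψ0 : ∀ x, 0 ≤ min (f x) k ^ (1 - θ + ε) * f x ^ θ := fun x =>
    mul_nonneg (Real.rpow_nonneg (hg0 x) _) (Real.rpow_nonneg (hf0 x) _)
  have hfθ0 : ∀ x, 0 ≤ f x ^ θ := fun x => Real.rpow_nonneg (hf0 x) _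
  have hΨm : Measurable fun x => ENNReal.ofReal (min (f x) k ^ (1 - θ + ε) * f x ^ θ) := by
    fun_prop
  have hΦm : Measurable fun x => ENNReal.ofReal (min (f x) k ^ (1 - θ) * f x ^ θ) := by
    fun_prop
  have hFθm : Measurable fun x => ENNReal.ofReal (f x ^ θ) := by fun_prop
  have hHm : Measurable fun x => ENNReal.ofReal (h x) := by fun_prop
  have hvm : Measurable fun Λ : ℝ => ENNReal.ofReal (ε * Λ ^ (ε - 1)) := by fun_prop
  have hv2m : Measurable fun Λ : ℝ => ENNReal.ofReal (c * Λ ^ (1 - θ)) := by fun_prop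
  haveI : IsFiniteMeasure (μ.restrict Q₂) := ⟨by rw [Measure.restrict_apply_univ]; exact hfin⟩
  haveI : IsFiniteMeasure (μ.restrict Q₁) :=
    ⟨by rw [Measure.restrict_apply_univ]; exact lt_of_le_of_lt (measure_mono hsub) hfin⟩
  have hsetg : ∀ Λ : ℝ, MeasurableSet {x | Λ < min (f x) k} := fun Λ =>
    measurableSet_lt measurable_const hg
  have hseth : ∀ Λ : ℝ, MeasurableSet {x | Λ < h x} := fun Λ =>
    measurableSet_lt measurable_const hh
  -- integrability facts
  have Imono : ∀ σ : ℝ, 0 ≤ σ → IntegrableOn (fun x => min (f x) k ^ σ * f x ^ θ) Q₂ μ := by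
    intro σ hσ
    refine Integrable.mono (hfint.const_mul (k ^ σ)) ?_ (ae_of_all _ fun x => ?_)
    · exact (show Measurable fun x => min (f x) k ^ σ * f x ^ θ by fun_prop).aestronglyMeasurable
    · rw [Real.norm_eq_abs, Real.norm_eq_abs,
        abs_of_nonneg (mul_nonneg (Real.rpow_nonneg (hg0 x) _) (hfθ0 x)),
        abs_of_nonneg (mul_nonneg (Real.rpow_nonneg hk.le _) (hfθ0 x))]
      exact mul_le_mul_of_nonneg_right (Real.rpow_le_rpow (hg0 x) (hgk x) hσ) (hfθ0 x)
  have I1 : IntegrableOn (fun x => min (f x) k ^ (1 - θ + ε) * f x ^ θ) Q₂ μ :=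
    Imono _ (by linarith)
  have I2 : IntegrableOn (fun x => min (f x) k ^ (1 - θ) * f x ^ θ) Q₂ μ :=
    Imono _ (by linarith)
  have I3 : IntegrableOn h Q₂ μ := by
    have hone : IntegrableOn (fun _ : X => (1:ℝ)) Q₂ μ := integrableOn_const hfin.ne
    refine Integrable.mono (hone.add hhint) hh.aestronglyMeasurable (ae_of_all _ fun x => ?_)
    have h1 : 0 ≤ h x ^ (1 + ε) := Real.rpow_nonneg (hh0 x) _
    have h2 : h x ≤ 1 + h x ^ (1 + ε) := by
      rcases le_or_gt (h x) 1 with hx | hx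
      · linarith
      · have := Real.rpow_le_rpow_of_exponent_le hx.le (by linarith : (1:ℝ) ≤ 1 + ε)
        rw [Real.rpow_one] at this; linarith
    simp only [Pi.add_apply, Real.norm_eq_abs]
    rw [abs_of_nonneg (hh0 x), abs_of_nonneg (by linarith : (0:ℝ) ≤ 1 + h x ^ (1 + ε))]
    exact h2
  -- pointwise layer-cake bound
  have hB : ∀ x : X, ENNReal.ofReal (min (f x) k ^ ε) ≤ ENNReal.ofReal (Λ₂ ^ ε)
      + ∫⁻ Λ in Set.Ioi Λ₂ ∩ Set.Iio (min (f x) k), ENNReal.ofReal (ε * Λ ^ (ε - 1)) := by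
    intro x
    rw [Set.Ioi_inter_Iio]
    rcases le_or_gt (min (f x) k) Λ₂ with hx | hx
    · rw [Set.Ioo_eq_empty (by exact fun hlt => absurd hx (not_le.2 hlt)),
        Measure.restrict_empty, lintegral_zero_measure, add_zero]
      exact ENNReal.ofReal_le_ofReal (Real.rpow_le_rpow (hg0 x) hx hε0.le)
    · have hcalc : ∫⁻ Λ in Set.Ioo Λ₂ (min (f x) k), ENNReal.ofReal (ε * Λ ^ (ε - 1))
          = ENNReal.ofReal (min (f x) k ^ ε - Λ₂ ^ ε) := by
        have hsplit : ∀ Λ : ℝ, ENNReal.ofReal (ε * Λ ^ (ε - 1))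
            = ENNReal.ofReal ε * ENNReal.ofReal (Λ ^ (ε - 1)) := fun Λ =>
          ENNReal.ofReal_mul hε0.le
        simp_rw [hsplit]
        rw [lintegral_const_mul' _ _ ENNReal.ofReal_ne_top,
          myLintegralRpowIoo (by linarith : (-1:ℝ) < ε - 1) hΛ₂.le hx.le,
          show ε - 1 + 1 = ε by ring, ← ENNReal.ofReal_mul hε0.le]
        congr 1
        rw [mul_comm ε _, div_mul_cancel₀ _ (ne_of_gt hε0)]
      have hle : Λ₂ ^ ε ≤ min (f x) k ^ ε := Real.rpow_le_rpow hΛ₂.le hx.le hε0.le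
      rw [hcalc, ← ENNReal.ofReal_add (Real.rpow_nonneg hΛ₂.le ε) (by linarith)]
      exact ENNReal.ofReal_le_ofReal (by linarith)
  -- core level-set estimate in ENNReal form
  have hcore : ∀ Λ : ℝ, Λ₂ < Λ →
      ∫⁻ x in {x | Λ < min (f x) k},
          ENNReal.ofReal (min (f x) k ^ (1 - θ) * f x ^ θ) ∂(μ.restrict Q₁)
        ≤ ENNReal.ofReal (c * Λ ^ (1 - θ)) *
            ∫⁻ x in {x | Λ < min (f x) k}, ENNReal.ofReal (f x ^ θ) ∂(μ.restrict Q₂)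
          + ENNReal.ofReal c *
            ∫⁻ x in {x | Λ < h x}, ENNReal.ofReal (h x) ∂(μ.restrict Q₂) := by
    intro Λ hΛ
    have hΛ0 : 0 < Λ := hΛ₂.trans hΛ
    have e1 : ∫⁻ x in {x | Λ < min (f x) k},
        ENNReal.ofReal (min (f x) k ^ (1 - θ) * f x ^ θ) ∂(μ.restrict Q₁)
        = ENNReal.ofReal
            (∫ x in Q₁ ∩ {x | Λ < min (f x) k}, min (f x) k ^ (1 - θ) * f x ^ θ ∂μ) := by
      rw [Measure.restrict_restrict (hsetg Λ), Set.inter_comm {x | Λ < min (f x) k} Q₁]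
      exact (MeasureTheory.ofReal_integral_eq_lintegral_ofReal
        (I2.mono_set (Set.inter_subset_left.trans hsub)) (ae_of_all _ hφ0)).symm
    have e2 : ∫⁻ x in {x | Λ < min (f x) k}, ENNReal.ofReal (f x ^ θ) ∂(μ.restrict Q₂)
        = ENNReal.ofReal (∫ x in Q₂ ∩ {x | Λ < min (f x) k}, f x ^ θ ∂μ) := by
      rw [Measure.restrict_restrict (hsetg Λ), Set.inter_comm {x | Λ < min (f x) k} Q₂]
      exact (MeasureTheory.ofReal_integral_eq_lintegral_ofReal
        (hfint.mono_set Set.inter_subset_left) (ae_of_all _ hfθ0)).symm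
    have e3 : ∫⁻ x in {x | Λ < h x}, ENNReal.ofReal (h x) ∂(μ.restrict Q₂)
        = ENNReal.ofReal (∫ x in Q₂ ∩ {x | Λ < h x}, h x ∂μ) := by
      rw [Measure.restrict_restrict (hseth Λ), Set.inter_comm {x | Λ < h x} Q₂]
      exact (MeasureTheory.ofReal_integral_eq_lintegral_ofReal
        (I3.mono_set Set.inter_subset_left) (ae_of_all _ hh0)).symm
    rw [e1, e2, e3]
    have hb0 : 0 ≤ ∫ x in Q₂ ∩ {x | Λ < min (f x) k}, f x ^ θ ∂μ :=
      integral_nonneg hfθ0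
    have hcc0 : 0 ≤ ∫ x in Q₂ ∩ {x | Λ < h x}, h x ∂μ := integral_nonneg hh0
    have h1 : 0 ≤ c * Λ ^ (1 - θ) := mul_nonneg hc0.le (Real.rpow_nonneg hΛ0.le _)
    refine le_trans (ENNReal.ofReal_le_ofReal (hyp Λ hΛ)) (le_of_eq ?_)
    rw [ENNReal.ofReal_add (mul_nonneg h1 hb0) (mul_nonneg hc0.le hcc0),
      ENNReal.ofReal_mul h1]
    congr 1
    exact ENNReal.ofReal_mul hc0.le
  -- the two swapped terms
  have tB : ∫⁻ Λ in Set.Ioi Λ₂,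
        (ENNReal.ofReal (ε * Λ ^ (ε - 1)) * ENNReal.ofReal (c * Λ ^ (1 - θ)) *
          ∫⁻ x in {x | Λ < min (f x) k}, ENNReal.ofReal (f x ^ θ) ∂(μ.restrict Q₂))
      ≤ ENNReal.ofReal (c * ε / (1 + ε - θ)) *
          ∫⁻ x in Q₂, ENNReal.ofReal (min (f x) k ^ (1 - θ + ε) * f x ^ θ) ∂μ := by
    refine le_trans
      (le_of_eq (myAuxSwap (μ.restrict Q₂) hg hFθm (hvm.mul hv2m) measurableSet_Ioi)) ?_
    refine le_trans (lintegral_mono fun x => ?_)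
      (le_of_eq (lintegral_const_mul _ hΨm))
    have hsub2 : Set.Ioi Λ₂ ∩ Set.Iio (min (f x) k) ⊆ Set.Ioo 0 (min (f x) k) := by
      rw [Set.Ioi_inter_Iio]
      exact Set.Ioo_subset_Ioo_left hΛ₂.le
    have hIoo : ∫⁻ Λ in Set.Ioo 0 (min (f x) k),
        (ENNReal.ofReal (ε * Λ ^ (ε - 1)) * ENNReal.ofReal (c * Λ ^ (1 - θ)))
        = ENNReal.ofReal (ε * c) *
            ENNReal.ofReal (min (f x) k ^ (ε - θ + 1) / (ε - θ + 1)) := by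
      rw [setLIntegral_congr_fun measurableSet_Ioo (fun Λ hΛ => ?_)
        (g := fun Λ => ENNReal.ofReal (ε * c) * ENNReal.ofReal (Λ ^ (ε - θ)))]
      · rw [lintegral_const_mul' _ _ ENNReal.ofReal_ne_top,
          myLintegralRpowIoo (by linarith : (-1:ℝ) < ε - θ) le_rfl (hg0 x),
          Real.zero_rpow (by linarith : ε - θ + 1 ≠ 0), sub_zero]
      · show ENNReal.ofReal (ε * Λ ^ (ε - 1)) * ENNReal.ofReal (c * Λ ^ (1 - θ))
            = ENNReal.ofReal (ε * c) * ENNReal.ofReal (Λ ^ (ε - θ))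
        rw [← ENNReal.ofReal_mul (mul_nonneg hε0.le (Real.rpow_nonneg hΛ.1.le _)),
          ← ENNReal.ofReal_mul (mul_nonneg hε0.le hc0.le)]
        congr 1
        rw [show ε - θ = (ε - 1) + (1 - θ) by ring, Real.rpow_add hΛ.1]
        ring
    refine le_trans (mul_le_mul_right (le_trans (lintegral_mono_set hsub2) (le_of_eq hIoo)) _)
      (le_of_eq ?_)
    rw [← ENNReal.ofReal_mul (mul_nonneg hε0.le hc0.le),
      ← ENNReal.ofReal_mul (hfθ0 x),
      ← ENNReal.ofReal_mul (div_nonneg (mul_nonneg hc0.le hε0.le) hden.le)]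
    congr 1
    rw [show ε - θ + 1 = 1 - θ + ε by ring]
    have hne2 : (1:ℝ) - θ + ε ≠ 0 := by linarith
    field_simp [ne_of_gt hden, hne2]
    ring
  have tC : ∫⁻ Λ in Set.Ioi Λ₂,
        (ENNReal.ofReal (ε * Λ ^ (ε - 1)) * ENNReal.ofReal c *
          ∫⁻ x in {x | Λ < h x}, ENNReal.ofReal (h x) ∂(μ.restrict Q₂))
      ≤ ENNReal.ofReal c * ∫⁻ x in Q₂, ENNReal.ofReal (h x ^ (1 + ε)) ∂μ := by
    refine le_trans
      (le_of_eq (myAuxSwap (μ.restrict Q₂) hh hHm (hvm.mul measurable_const) measurableSet_Ioi)) ?_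
    refine le_trans (lintegral_mono fun x => ?_)
      (le_of_eq (lintegral_const_mul _ (by fun_prop)))
    have hsub2 : Set.Ioi Λ₂ ∩ Set.Iio (h x) ⊆ Set.Ioo 0 (h x) := by
      rw [Set.Ioi_inter_Iio]
      exact Set.Ioo_subset_Ioo_left hΛ₂.le
    have hIoo : ∫⁻ Λ in Set.Ioo 0 (h x),
        (ENNReal.ofReal (ε * Λ ^ (ε - 1)) * ENNReal.ofReal c)
        = ENNReal.ofReal (ε * c) * ENNReal.ofReal (h x ^ (ε - 1 + 1) / (ε - 1 + 1)) := by
      rw [setLIntegral_congr_fun measurableSet_Ioo (fun Λ hΛ => ?_)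
        (g := fun Λ => ENNReal.ofReal (ε * c) * ENNReal.ofReal (Λ ^ (ε - 1)))]
      · rw [lintegral_const_mul' _ _ ENNReal.ofReal_ne_top,
          myLintegralRpowIoo (by linarith : (-1:ℝ) < ε - 1) le_rfl (hh0 x),
          Real.zero_rpow (by linarith : ε - 1 + 1 ≠ 0), sub_zero]
      · show ENNReal.ofReal (ε * Λ ^ (ε - 1)) * ENNReal.ofReal c
            = ENNReal.ofReal (ε * c) * ENNReal.ofReal (Λ ^ (ε - 1))
        rw [← ENNReal.ofReal_mul (mul_nonneg hε0.le (Real.rpow_nonneg hΛ.1.le _)),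
          ← ENNReal.ofReal_mul (mul_nonneg hε0.le hc0.le)]
        congr 1
        ring
    refine le_trans (mul_le_mul_right (le_trans (lintegral_mono_set hsub2) (le_of_eq hIoo)) _)
      (le_of_eq ?_)
    rw [← ENNReal.ofReal_mul (mul_nonneg hε0.le hc0.le),
      ← ENNReal.ofReal_mul (hh0 x), ← ENNReal.ofReal_mul hc0.le]
    congr 1
    rw [show ε - 1 + 1 = ε by ring,
      Real.rpow_add' (hh0 x) (by linarith : (1:ℝ) + ε ≠ 0), Real.rpow_one]
    field_simp [ne_of_gt hε0]
  -- main chain in ENNReal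
  have key : ∫⁻ x in Q₁, ENNReal.ofReal (min (f x) k ^ (1 - θ + ε) * f x ^ θ) ∂μ
      ≤ ENNReal.ofReal (Λ₂ ^ ε) *
          ∫⁻ x in Q₁, ENNReal.ofReal (min (f x) k ^ (1 - θ) * f x ^ θ) ∂μ
        + ENNReal.ofReal (c * ε / (1 + ε - θ)) *
          ∫⁻ x in Q₂, ENNReal.ofReal (min (f x) k ^ (1 - θ + ε) * f x ^ θ) ∂μ
        + ENNReal.ofReal c * ∫⁻ x in Q₂, ENNReal.ofReal (h x ^ (1 + ε)) ∂μ := by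
    calc ∫⁻ x in Q₁, ENNReal.ofReal (min (f x) k ^ (1 - θ + ε) * f x ^ θ) ∂μ
        = ∫⁻ x in Q₁, (ENNReal.ofReal (min (f x) k ^ (1 - θ) * f x ^ θ)
            * ENNReal.ofReal (min (f x) k ^ ε)) ∂μ := by
          refine lintegral_congr fun x => ?_
          rw [← ENNReal.ofReal_mul (hφ0 x)]
          congr 1
          rw [Real.rpow_add' (hg0 x) (by linarith : (1 - θ) + ε ≠ 0)]
          ring
      _ ≤ ∫⁻ x in Q₁, (ENNReal.ofReal (min (f x) k ^ (1 - θ) * f x ^ θ)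
            * (ENNReal.ofReal (Λ₂ ^ ε) + ∫⁻ Λ in Set.Ioi Λ₂ ∩ Set.Iio (min (f x) k),
                ENNReal.ofReal (ε * Λ ^ (ε - 1)))) ∂μ :=
          lintegral_mono fun x => mul_le_mul_right (hB x) _
      _ = ENNReal.ofReal (Λ₂ ^ ε) *
            ∫⁻ x in Q₁, ENNReal.ofReal (min (f x) k ^ (1 - θ) * f x ^ θ) ∂μ
          + ∫⁻ x in Q₁, (ENNReal.ofReal (min (f x) k ^ (1 - θ) * f x ^ θ)
              * ∫⁻ Λ in Set.Ioi Λ₂ ∩ Set.Iio (min (f x) k),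
                  ENNReal.ofReal (ε * Λ ^ (ε - 1))) ∂μ := by
          simp_rw [mul_add]
          rw [lintegral_add_left (hΦm.mul_const _), lintegral_mul_const _ hΦm]
          ring
      _ = ENNReal.ofReal (Λ₂ ^ ε) *
            ∫⁻ x in Q₁, ENNReal.ofReal (min (f x) k ^ (1 - θ) * f x ^ θ) ∂μ
          + ∫⁻ Λ in Set.Ioi Λ₂, (ENNReal.ofReal (ε * Λ ^ (ε - 1)) *
              ∫⁻ x in {x | Λ < min (f x) k},
                ENNReal.ofReal (min (f x) k ^ (1 - θ) * f x ^ θ) ∂(μ.restrict Q₁)) := by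
          congr 1
          exact (myAuxSwap (μ.restrict Q₁) hg hΦm hvm measurableSet_Ioi).symm
      _ ≤ ENNReal.ofReal (Λ₂ ^ ε) *
            ∫⁻ x in Q₁, ENNReal.ofReal (min (f x) k ^ (1 - θ) * f x ^ θ) ∂μ
          + ∫⁻ Λ in Set.Ioi Λ₂, (ENNReal.ofReal (ε * Λ ^ (ε - 1)) *
              (ENNReal.ofReal (c * Λ ^ (1 - θ)) *
                ∫⁻ x in {x | Λ < min (f x) k}, ENNReal.ofReal (f x ^ θ) ∂(μ.restrict Q₂)
              + ENNReal.ofReal c *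
                ∫⁻ x in {x | Λ < h x}, ENNReal.ofReal (h x) ∂(μ.restrict Q₂))) := by
          refine add_le_add_right (lintegral_mono_ae ?_) _
          refine (ae_restrict_iff' measurableSet_Ioi).2 (ae_of_all _ fun Λ hΛ => ?_)
          exact mul_le_mul_right (hcore Λ hΛ) _
      _ = ENNReal.ofReal (Λ₂ ^ ε) *
            ∫⁻ x in Q₁, ENNReal.ofReal (min (f x) k ^ (1 - θ) * f x ^ θ) ∂μ
          + ((∫⁻ Λ in Set.Ioi Λ₂, (ENNReal.ofReal (ε * Λ ^ (ε - 1)) *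
                ENNReal.ofReal (c * Λ ^ (1 - θ)) *
                ∫⁻ x in {x | Λ < min (f x) k}, ENNReal.ofReal (f x ^ θ) ∂(μ.restrict Q₂)))
            + ∫⁻ Λ in Set.Ioi Λ₂, (ENNReal.ofReal (ε * Λ ^ (ε - 1)) * ENNReal.ofReal c *
                ∫⁻ x in {x | Λ < h x}, ENNReal.ofReal (h x) ∂(μ.restrict Q₂))) := by
          congr 1
          have M : Measurable (fun Λ : ℝ => ENNReal.ofReal (ε * Λ ^ (ε - 1)) *
              ENNReal.ofReal (c * Λ ^ (1 - θ)) *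
              ∫⁻ x in {x | Λ < min (f x) k}, ENNReal.ofReal (f x ^ θ) ∂(μ.restrict Q₂)) :=
            (hvm.mul hv2m).mul (myMeasLevel (μ.restrict Q₂) hg hFθm)
          exact (lintegral_congr fun Λ => by
            rw [mul_add, ← mul_assoc, ← mul_assoc]).trans
            (lintegral_add_left M (fun Λ : ℝ => ENNReal.ofReal (ε * Λ ^ (ε - 1)) *
              ENNReal.ofReal c *
              ∫⁻ x in {x | Λ < h x}, ENNReal.ofReal (h x) ∂(μ.restrict Q₂)))
      _ ≤ _ := by
          rw [add_assoc]
          exact add_le_add_right (add_le_add tB tC) _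
  -- convert back to real integrals
  have eL := MeasureTheory.ofReal_integral_eq_lintegral_ofReal (I1.mono_set hsub)
    (ae_of_all _ hψ0)
  have eM := MeasureTheory.ofReal_integral_eq_lintegral_ofReal (I2.mono_set hsub)
    (ae_of_all _ hφ0)
  have eS := MeasureTheory.ofReal_integral_eq_lintegral_ofReal I1 (ae_of_all _ hψ0)
  have eH := MeasureTheory.ofReal_integral_eq_lintegral_ofReal hhint
    (ae_of_all _ fun x => Real.rpow_nonneg (hh0 x) _)
  have n1 : 0 ≤ ∫ x in Q₁, min (f x) k ^ (1 - θ) * f x ^ θ ∂μ := integral_nonneg hφ0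
  have n2 : 0 ≤ ∫ x in Q₂, min (f x) k ^ (1 - θ + ε) * f x ^ θ ∂μ := integral_nonneg hψ0
  have n3 : 0 ≤ ∫ x in Q₂, h x ^ (1 + ε) ∂μ :=
    integral_nonneg fun x => Real.rpow_nonneg (hh0 x) _
  have m1 : 0 ≤ Λ₂ ^ ε * ∫ x in Q₁, min (f x) k ^ (1 - θ) * f x ^ θ ∂μ :=
    mul_nonneg (Real.rpow_nonneg hΛ₂.le _) n1
  have m2 : 0 ≤ c * ε / (1 + ε - θ) * ∫ x in Q₂, min (f x) k ^ (1 - θ + ε) * f x ^ θ ∂μ :=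
    mul_nonneg (div_nonneg (mul_nonneg hc0.le hε0.le) hden.le) n2
  have m3 : 0 ≤ c * ∫ x in Q₂, h x ^ (1 + ε) ∂μ := mul_nonneg hc0.le n3
  refine (ENNReal.ofReal_le_ofReal_iff (by linarith)).1 ?_
  rw [eL, ENNReal.ofReal_add (by linarith) m3, ENNReal.ofReal_add m1 m2,
    ENNReal.ofReal_mul (Real.rpow_nonneg hΛ₂.le _),
    ENNReal.ofReal_mul (div_nonneg (mul_nonneg hc0.le hε0.le) hden.le),
    ENNReal.ofReal_mul hc0.le, eM, eS, eH]
  exact key
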